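/- (Theorem 7.1, Case 1) Let i, j, k be nonnegative integers and ℓ = −(i + j + k). Then the symmetrized coefficient Z_{ijkℓ} = (1/6)(N_{ijkℓ} + N_{ikjℓ} + N_{jikℓ} + N_{jkiℓ} + N_{kijℓ} + N_{kjiℓ}) equals P₁(i, j, k) = (1/90) Σ_{(a,b,c)} g(a, b, c), where the sum is over all 6 ordered permutations (a,b,c) of (i,j,k) and g(i, j, k) = 3i⁵ + 15i⁴j + 10i³j² + 10i³jk − 5i³ − 25i²j − 10ijk + 2i. -/

import Mathlib

/-- `N_{j₁j₂j₃j₄} = Σ_{n∈ℤ} (|f(n)| − f(n))` with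
`f(n) = n(n+j₁)(n+j₁+j₂)(n+j₁+j₂+j₃)` (a finite sum). -/
noncomputable def N4 (j₁ j₂ j₃ j₄ : ℤ) : ℤ :=
  ∑ᶠ n : ℤ, (|n * (n + j₁) * (n + j₁ + j₂) * (n + j₁ + j₂ + j₃)|
    - n * (n + j₁) * (n + j₁ + j₂) * (n + j₁ + j₂ + j₃))

/-- The polynomial `g` of Theorem 7.1, Case 1. -/
def gPoly (i j k : ℤ) : ℤ :=
  3 * i ^ 5 + 15 * i ^ 4 * j + 10 * i ^ 3 * j ^ 2 + 10 * i ^ 3 * j * k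
    - 5 * i ^ 3 - 25 * i ^ 2 * j - 10 * i * j * k + 2 * i

/-- `60` times the partial sum of the quartic `m(m-a)(m-b)(m-c)`. -/
lemma sumQuartic (a b c : ℤ) (n : ℕ) :
    60 * ∑ m ∈ Finset.range n, ((m : ℤ) * ((m : ℤ) - a) * ((m : ℤ) - b) * ((m : ℤ) - c))
      = 2 * n * (n - 1) * (2 * n - 1) * (3 * (n : ℤ) ^ 2 - 3 * n - 1)
        - 15 * (a + b + c) * (n : ℤ) ^ 2 * ((n : ℤ) - 1) ^ 2
        + 10 * (a * b + a * c + b * c) * n * (n - 1) * (2 * n - 1)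
        - 30 * a * b * c * n * (n - 1) := by
  induction n with
  | zero => simp
  | succ n ih =>
    rw [Finset.sum_range_succ, mul_add, ih]
    push_cast
    ring

/-- Auxiliary closed form polynomial. -/
def Qp (a b c x : ℤ) : ℤ :=
  2 * x * (x - 1) * (2 * x - 1) * (3 * x ^ 2 - 3 * x - 1)
    - 15 * (a + (a + b) + (a + b + c)) * x ^ 2 * (x - 1) ^ 2
    + 10 * (a * (a + b) + a * (a + b + c) + (a + b) * (a + b + c)) * x * (x - 1) * (2 * x - 1)
    - 30 * a * (a + b) * (a + b + c) * x * (x - 1)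

lemma N4_closed (a b c : ℤ) (ha : 0 ≤ a) (hb : 0 ≤ b) (hc : 0 ≤ c) (d : ℤ) :
    30 * N4 a b c d = - Qp a b c a + Qp a b c (a + b) - Qp a b c (a + b + c) := by
  have hab : 0 ≤ a + b := by linarith
  have hss : (0:ℤ) ≤ a + b + c := by linarith
  set A : ℕ := a.toNat with hA
  set B : ℕ := (a + b).toNat with hB
  set S : ℕ := (a + b + c).toNat with hS
  have hAZ : (A : ℤ) = a := Int.toNat_of_nonneg ha
  have hBZ : (B : ℤ) = a + b := Int.toNat_of_nonneg hab
  have hSZ : (S : ℤ) = a + b + c := Int.toNat_of_nonneg hss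
  have hAB : A ≤ B := Int.toNat_le_toNat (by linarith)
  have hBS : B ≤ S := Int.toNat_le_toNat (by linarith)
  set F : ℤ → ℤ := fun n => |n * (n + a) * (n + a + b) * (n + a + b + c)|
    - n * (n + a) * (n + a + b) * (n + a + b + c) with hF
  set G : ℕ → ℤ := fun m => ((m : ℤ)) * ((m : ℤ) - a) * ((m : ℤ) - (a + b)) * ((m : ℤ) - (a + b + c))
    with hG
  have hFG : ∀ m : ℕ, F (-(m : ℤ)) = |G m| - G m := by
    intro m
    have h1 : (-(m : ℤ)) * (-(m : ℤ) + a) * (-(m : ℤ) + a + b) * (-(m : ℤ) + a + b + c)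
        = G m := by simp only [hG]; ring
    simp only [hF, h1]
  have hsupp : Function.support F ⊆ ↑((Finset.range S).image (fun m : ℕ => -(m : ℤ))) := by
    intro n hn
    have hne : F n ≠ 0 := hn
    have hneg : n * (n + a) * (n + a + b) * (n + a + b + c) < 0 := by
      by_contra h
      push_neg at h
      exact hne (by simp [hF, abs_of_nonneg h, -abs_mul])
    have hn0 : n < 0 := by
      by_contra h
      push_neg at h
      have : 0 ≤ n * (n + a) * (n + a + b) * (n + a + b + c) := by positivity
      linarith
    have hns : -(a + b + c) < n := by
      by_contra h
      push_neg at h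
      have p1 : 0 ≤ n * (n + a) := mul_nonneg_of_nonpos_of_nonpos (by linarith) (by linarith)
      have p2 : 0 ≤ (n + a + b) * (n + a + b + c) :=
        mul_nonneg_of_nonpos_of_nonpos (by linarith) (by linarith)
      have p3 : 0 ≤ (n * (n + a)) * ((n + a + b) * (n + a + b + c)) := mul_nonneg p1 p2
      nlinarith [p3]
    simp only [Finset.coe_image, Set.mem_image, Finset.mem_coe, Finset.mem_range]
    refine ⟨(-n).toNat, ?_, ?_⟩
    · exact (Int.toNat_lt_toNat (by linarith)).2 (by linarith)
    · simp [Int.toNat_of_nonneg (by linarith : (0:ℤ) ≤ -n)]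
  have hinj : ∀ x ∈ Finset.range S, ∀ y ∈ Finset.range S,
      (fun m : ℕ => -(m : ℤ)) x = (fun m : ℕ => -(m : ℤ)) y → x = y := by
    intro x _ y _ h
    simpa using h
  have hN4 : N4 a b c d = ∑ m ∈ Finset.range S, (|G m| - G m) := by
    have h0 : N4 a b c d = ∑ᶠ n : ℤ, F n := rfl
    rw [h0, finsum_eq_sum_of_support_subset F hsupp, Finset.sum_image hinj]
    exact Finset.sum_congr rfl fun m _ => hFG m
  have sign1 : ∀ m ∈ Finset.Ico 0 A, |G m| - G m = -2 * G m := by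
    intro m hm
    have hm' : (m : ℤ) < a := by
      have h1 := (Finset.mem_Ico.1 hm).2
      have h2 : (m : ℤ) < (A : ℤ) := by exact_mod_cast h1
      linarith [hAZ]
    have h0 : (0:ℤ) ≤ (m : ℤ) := Int.natCast_nonneg m
    have hGle : G m ≤ 0 := by
      have he : G m = -(((m : ℤ) * (a - m)) * (((a + b) - m) * ((a + b + c) - m))) := by
        simp only [hG]; ring
      rw [he]
      exact neg_nonpos_of_nonneg (mul_nonneg (mul_nonneg h0 (by linarith))
        (mul_nonneg (by linarith) (by linarith)))
    rw [abs_of_nonpos hGle]; ring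
  have sign2 : ∀ m ∈ Finset.Ico A B, |G m| - G m = 0 := by
    intro m hm
    have h1 : a ≤ (m : ℤ) := by
      have h := (Finset.mem_Ico.1 hm).1
      have h' : (A : ℤ) ≤ (m : ℤ) := by exact_mod_cast h
      linarith [hAZ]
    have h2 : (m : ℤ) < a + b := by
      have h := (Finset.mem_Ico.1 hm).2
      have h' : (m : ℤ) < (B : ℤ) := by exact_mod_cast h
      linarith [hBZ]
    have h0 : (0:ℤ) ≤ (m : ℤ) := Int.natCast_nonneg m
    have hGge : 0 ≤ G m := by
      have he : G m = ((m : ℤ) * ((m : ℤ) - a)) * (((a + b) - m) * ((a + b + c) - m)) := by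
        simp only [hG]; ring
      rw [he]
      exact mul_nonneg (mul_nonneg h0 (by linarith)) (mul_nonneg (by linarith) (by linarith))
    rw [abs_of_nonneg hGge]; ring
  have sign3 : ∀ m ∈ Finset.Ico B S, |G m| - G m = -2 * G m := by
    intro m hm
    have h1 : a + b ≤ (m : ℤ) := by
      have h := (Finset.mem_Ico.1 hm).1
      have h' : (B : ℤ) ≤ (m : ℤ) := by exact_mod_cast h
      linarith [hBZ]
    have h2 : (m : ℤ) < a + b + c := by
      have h := (Finset.mem_Ico.1 hm).2
      have h' : (m : ℤ) < (S : ℤ) := by exact_mod_cast h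
      linarith [hSZ]
    have h0 : (0:ℤ) ≤ (m : ℤ) := Int.natCast_nonneg m
    have hGle : G m ≤ 0 := by
      have he : G m = -(((m : ℤ) * ((m : ℤ) - a)) * (((m : ℤ) - (a + b)) * ((a + b + c) - m))) := by
        simp only [hG]; ring
      rw [he]
      exact neg_nonpos_of_nonneg (mul_nonneg (mul_nonneg h0 (by linarith))
        (mul_nonneg (by linarith) (by linarith)))
    rw [abs_of_nonpos hGle]; ring
  have e2 : ∀ T : Finset ℕ, ∑ m ∈ T, (-2) * G m = -2 * ∑ m ∈ T, G m := by
    intro T; rw [Finset.mul_sum]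
  have hsplit : ∑ m ∈ Finset.range S, (|G m| - G m)
      = -2 * ∑ m ∈ Finset.range A, G m
        + 2 * ∑ m ∈ Finset.range B, G m - 2 * ∑ m ∈ Finset.range S, G m := by
    have e1 : ∑ m ∈ Finset.range S, (|G m| - G m)
        = ∑ m ∈ Finset.Ico 0 A, (|G m| - G m) + ∑ m ∈ Finset.Ico A B, (|G m| - G m)
          + ∑ m ∈ Finset.Ico B S, (|G m| - G m) := by
      rw [Finset.sum_Ico_consecutive _ (Nat.zero_le A) hAB,
        Finset.sum_Ico_consecutive _ (Nat.zero_le B) hBS, ← Finset.range_eq_Ico]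
    rw [e1, Finset.sum_congr rfl sign1, Finset.sum_congr rfl sign2,
      Finset.sum_congr rfl sign3, Finset.sum_const_zero, e2, e2,
      Finset.sum_Ico_eq_sub G hBS, ← Finset.range_eq_Ico]
    ring
  have qA := sumQuartic a (a + b) (a + b + c) A
  have qB := sumQuartic a (a + b) (a + b + c) B
  have qS := sumQuartic a (a + b) (a + b + c) S
  rw [hAZ] at qA
  rw [hBZ] at qB
  rw [hSZ] at qS
  rw [hN4, hsplit]
  simp only [hG] at qA qB qS ⊢
  simp only [Qp]
  linear_combination (-1 : ℤ) * qA + qB - qS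

theorem zetaCoef_case1 (i j k : ℤ) (hi : 0 ≤ i) (hj : 0 ≤ j) (hk : 0 ≤ k)
    (l : ℤ) (hl : l = -(i + j + k)) :
    ((N4 i j k l + N4 i k j l + N4 j i k l + N4 j k i l + N4 k i j l
        + N4 k j i l : ℤ) : ℚ) / 6
      = (1 / 90) * ((gPoly i j k + gPoly i k j + gPoly j i k + gPoly j k i
        + gPoly k i j + gPoly k j i : ℤ) : ℚ) := by
  have h1 := N4_closed i j k hi hj hk l
  have h2 := N4_closed i k j hi hk hj l
  have h3 := N4_closed j i k hj hi hk l
  have h4 := N4_closed j k i hj hk hi l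
  have h5 := N4_closed k i j hk hi hj l
  have h6 := N4_closed k j i hk hj hi l
  have key : 15 * (N4 i j k l + N4 i k j l + N4 j i k l + N4 j k i l + N4 k i j l
      + N4 k j i l) = gPoly i j k + gPoly i k j + gPoly j i k + gPoly j k i
      + gPoly k i j + gPoly k j i := by
    simp only [Qp, gPoly] at *
    linarith [h1, h2, h3, h4, h5, h6]
  have keyQ : (15 : ℚ) * ((N4 i j k l + N4 i k j l + N4 j i k l + N4 j k i l + N4 k i j l
      + N4 k j i l : ℤ) : ℚ) = ((gPoly i j k + gPoly i k j + gPoly j i k + gPoly j k i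
      + gPoly k i j + gPoly k j i : ℤ) : ℚ) := by exact_mod_cast congrArg (Int.cast : ℤ → ℚ) key
  push_cast at keyQ ⊢
  field_simp
  linarith [keyQ]
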